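/- arXiv:1008.2638 — 3 statements merged into one kernel-verified Lean document; each statement's English description precedes it below -/
import Mathlib

section
/- Let n be a natural number, N = ⌊(n-1)/2⌋, and for 0 ≤ s ≤ N define C(s,n) = s(n-s-1)(n - 2(N - s + 1)) - 2·Σ_{i=1}^{s-1} i(n-i-1). Then C(s,n) ≥ 0 for all 0 ≤ s ≤ N. -/
lemma icc_step (s : ℤ) (h1 : 1 ≤ s) :
    Finset.Icc 1 s = insert s (Finset.Icc 1 (s - 1)) := by
  ext x
  simp only [Finset.mem_Icc, Finset.mem_insert]
  omega

lemma sumform (n : ℤ) (s : ℤ) (hs : 0 ≤ s) :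
    6 * ∑ i ∈ Finset.Icc 1 (s - 1), i * (n - i - 1)
      = 3 * (n - 1) * s * (s - 1) - (s - 1) * s * (2 * s - 1) := by
  refine Int.le_induction
    (motive := fun t _ => 6 * ∑ i ∈ Finset.Icc 1 (t - 1), i * (n - i - 1)
      = 3 * (n - 1) * t * (t - 1) - (t - 1) * t * (2 * t - 1)) ?_ ?_ s hs
  · norm_num
  · intro s hs ih
    rcases eq_or_lt_of_le hs with h | h
    · rw [← h]; norm_num
    · have h1 : (1 : ℤ) ≤ s := by omega
      have he : s + 1 - 1 = s := by ring
      rw [he, icc_step s h1, Finset.sum_insert (by simp),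
        mul_add, ih]
      ring

theorem stmt5 (n s : ℤ) (hs0 : 0 ≤ s) (hs : s ≤ (n - 1) / 2) :
    0 ≤ s * (n - s - 1) * (n - 2 * ((n - 1) / 2 - s + 1))
      - 2 * ∑ i ∈ Finset.Icc 1 (s - 1), i * (n - i - 1) := by
  set N : ℤ := (n - 1) / 2 with hN
  set r : ℤ := (n - 1) % 2 with hr
  have hnr : 2 * N + r = n - 1 := Int.mul_ediv_add_emod (n - 1) 2
  have hr0 : 0 ≤ r := Int.emod_nonneg _ (by norm_num)
  have hr1 : r ≤ 1 := by
    have := Int.emod_lt_of_pos (n - 1) (by norm_num : (0:ℤ) < 2)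
    omega
  have hsum := sumform n s hs0
  have key : 0 ≤ 3 * (s * (n - s - 1) * (n - 2 * (N - s + 1)))
      - (3 * (n - 1) * s * (s - 1) - (s - 1) * s * (2 * s - 1)) := by
    have hn : n = 2 * N + r + 1 := by omega
    rw [hn]
    have ht : 0 ≤ N - s := by omega
    nlinarith [mul_nonneg (mul_nonneg hs0 hs0) hr0,
      mul_nonneg (mul_nonneg hs0 ht) hr0,
      mul_nonneg hs0 (mul_nonneg hr0 hr0),
      mul_nonneg (mul_nonneg hs0 hs0) hs0,
      mul_nonneg ht (mul_nonneg hs0 hs0)]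
  linarith [key, hsum]
end

section
/- Let n ≥ 1 and consider 2n points placed at the vertices of a regular 2n-gon, colored alternately black and white. Partition the set of 4-element subsets of these points by color pattern: (1) all four the same color; (2) two black and two white alternating around the polygon; (3) three of one color and one of the other; (4) two consecutive points of one color followed by two consecutive points of the other. Then the number of subsets of type (3) is 2n·C(n,3) and the number of subsets of type (4) is n·C(n,3). -/
set_option maxHeartbeats 1000000
open Finset

lemma quad_nodup {α : Type*} [LinearOrder α] [DecidableEq α] {a b c d : α}
    (h1 : a < b) (h2 : b < c) (h3 : c < d) : ([a,b,c,d] : List α).Nodup := by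
  simp [List.nodup_cons]
  refine ⟨⟨h1.ne, (h1.trans h2).ne, (h1.trans (h2.trans h3)).ne⟩, ⟨h2.ne, (h2.trans h3).ne⟩, h3.ne⟩

lemma sort_quad {α : Type*} [LinearOrder α] [DecidableEq α] {a b c d : α}
    (h1 : a < b) (h2 : b < c) (h3 : c < d) :
    ({a,b,c,d} : Finset α).sort (· ≤ ·) = [a,b,c,d] := by
  classical
  refine (fun (hp : List.Perm (({a,b,c,d} : Finset α).sort (· ≤ ·)) [a,b,c,d]) h1 h2 =>
    List.Perm.eq_of_pairwise' (r := fun x y : α => x ≤ y) h1 h2 hp) ?_ ?_ ?_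
  · refine (Finset.sort_perm_toList _ _).trans ?_
    apply List.perm_of_nodup_nodup_toFinset_eq (Finset.nodup_toList _) (quad_nodup h1 h2 h3)
    simp [Finset.toList_toFinset]
  · exact Finset.pairwise_sort _ _
  · simp [List.pairwise_cons]
    exact ⟨⟨h1.le, (h1.trans h2).le, (h1.trans (h2.trans h3)).le⟩, ⟨h2.le, (h2.trans h3).le⟩, h3.le⟩

lemma filter_quad_card {α : Type*} [LinearOrder α] [DecidableEq α] {a b c d : α} (p : α → Prop) [DecidablePred p]
    (h1 : a < b) (h2 : b < c) (h3 : c < d) :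
    (({a,b,c,d} : Finset α).filter p).card =
      (if p a then 1 else 0) + (if p b then 1 else 0) + (if p c then 1 else 0)
        + (if p d then 1 else 0) := by
  classical
  have hs : ({a,b,c,d} : Finset α).sort (· ≤ ·) = [a,b,c,d] := sort_quad h1 h2 h3
  have : (({a,b,c,d} : Finset α).filter p).card
      = (([a,b,c,d] : List α).filter (fun x => decide (p x))).length := by
    rw [Finset.card, Finset.filter_val, ← hs, ← Finset.sort_eq _ (· ≤ ·), Multiset.filter_coe,
      Multiset.coe_card]
  rw [this]
  by_cases p a <;> by_cases p b <;> by_cases p c <;> by_cases p d <;> simp [List.filter, *]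

lemma quad_card {α : Type*} [LinearOrder α] [DecidableEq α] {a b c d : α}
    (h1 : a < b) (h2 : b < c) (h3 : c < d) :
    ({a,b,c,d} : Finset α).card = 4 := by
  rw [← Finset.length_sort (· ≤ ·), sort_quad h1 h2 h3]
  rfl

lemma exists_sort_quad {α : Type*} [LinearOrder α] [DecidableEq α] {S : Finset α} (h : S.card = 4) :
    ∃ a b c d : α, a < b ∧ b < c ∧ c < d ∧ S = {a,b,c,d} ∧
      S.sort (· ≤ ·) = [a,b,c,d] := by
  classical
  have hl : (S.sort (· ≤ ·)).length = 4 := by rw [Finset.length_sort]; exact h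
  have hsrt := (Finset.sortedLT_sort S).pairwise
  have htf := Finset.sort_toFinset S (· ≤ ·)
  rcases hll : S.sort (· ≤ ·) with _ | ⟨a, _ | ⟨b, _ | ⟨c, _ | ⟨d, _ | ⟨e, l⟩⟩⟩⟩⟩ <;>
    rw [hll] at hl <;> simp at hl
  rw [hll] at hsrt htf
  simp [List.pairwise_cons] at hsrt
  obtain ⟨⟨hab, -, -⟩, ⟨hbc, -⟩, hcd⟩ := hsrt
  refine ⟨a, b, c, d, hab, hbc, hcd, ?_, rfl⟩
  rw [← htf]; simp

lemma quad_inj {α : Type*} [LinearOrder α] [DecidableEq α] {a b c d a' b' c' d' : α}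
    (h1 : a < b) (h2 : b < c) (h3 : c < d) (h1' : a' < b') (h2' : b' < c') (h3' : c' < d')
    (h : ({a,b,c,d} : Finset α) = {a',b',c',d'}) : a = a' ∧ b = b' ∧ c = c' ∧ d = d' := by
  have e1 := sort_quad h1 h2 h3
  have e2 := sort_quad h1' h2' h3'
  rw [h] at e1
  have := e1.symm.trans e2
  simp only [List.cons.injEq, and_true] at this
  exact this

lemma chains_card (m : ℕ) :
    ((univ : Finset (Fin m × Fin m × Fin m × Fin m)).filter
      (fun t => t.1 < t.2.1 ∧ t.2.1 < t.2.2.1 ∧ t.2.2.1 < t.2.2.2)).card = m.choose 4 := by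
  classical
  rw [show m.choose 4 = ((univ : Finset (Fin m)).powersetCard 4).card by
    rw [Finset.card_powersetCard, Finset.card_univ, Fintype.card_fin]]
  apply Finset.card_bij (fun t _ => ({t.1, t.2.1, t.2.2.1, t.2.2.2} : Finset (Fin m)))
  · rintro ⟨a,b,c,d⟩ ht
    simp only [mem_filter] at ht
    obtain ⟨-, h1, h2, h3⟩ := ht
    rw [Finset.mem_powersetCard_univ]
    exact quad_card h1 h2 h3
  · rintro ⟨a,b,c,d⟩ ht ⟨a',b',c',d'⟩ ht' h
    simp only [mem_filter] at ht ht'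
    obtain ⟨-, h1, h2, h3⟩ := ht
    obtain ⟨-, h1', h2', h3'⟩ := ht'
    obtain ⟨rfl, rfl, rfl, rfl⟩ := quad_inj h1 h2 h3 h1' h2' h3' h
    rfl
  · intro S hS
    rw [Finset.mem_powersetCard_univ] at hS
    obtain ⟨a, b, c, d, h1, h2, h3, rfl, -⟩ := exists_sort_quad hS
    exact ⟨(a,b,c,d), by simp [h1, h2, h3], rfl⟩

lemma evens_card (n : ℕ) :
    ((univ : Finset (Fin (2*n))).filter (fun k => k.val % 2 = 0)).card = n := by
  have h : ((univ : Finset (Fin (2*n))).filter (fun k => k.val % 2 = 0)).card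
      = (univ : Finset (Fin n)).card := by
    refine Finset.card_bij'
      (fun (k : Fin (2*n)) _ => (⟨k.val / 2, by have := k.isLt; omega⟩ : Fin n))
      (fun (i : Fin n) _ => (⟨2 * i.val, by have := i.isLt; omega⟩ : Fin (2*n))) ?_ ?_ ?_ ?_
    · intro k hk; exact Finset.mem_univ _
    · intro i _; simp only [mem_filter, mem_univ, true_and]; omega
    · intro k hk; simp only [mem_filter] at hk; apply Fin.ext; simp; omega
    · intro i _; apply Fin.ext; simp
  simpa using h

lemma odds_card (n : ℕ) :
    ((univ : Finset (Fin (2*n))).filter (fun k => ¬ k.val % 2 = 0)).card = n := by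
  have := Finset.card_filter_add_card_filter_not (s := (univ : Finset (Fin (2*n))))
    (fun k => k.val % 2 = 0)
  rw [evens_card, Finset.card_univ, Fintype.card_fin] at this
  omega

lemma count_filter_eq {α : Type*} [Fintype α] [DecidableEq α] (p : α → Prop) [DecidablePred p]
    (a b : ℕ) :
    ((univ : Finset (Finset α)).filter (fun S => (S.filter p).card = a ∧
        (S.filter (fun x => ¬ p x)).card = b)).card
      = ((univ : Finset α).filter p).card.choose a *
        ((univ : Finset α).filter (fun x => ¬ p x)).card.choose b := by
  rw [← Finset.card_powersetCard, ← Finset.card_powersetCard, ← Finset.card_product]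
  refine Finset.card_bij' (fun S _ => (S.filter p, S.filter (fun x => ¬ p x)))
    (fun T _ => T.1 ∪ T.2) ?_ ?_ ?_ ?_
  · intro S hS
    simp only [mem_filter, mem_univ, true_and] at hS
    simp only [Finset.mem_product, Finset.mem_powersetCard]
    exact ⟨⟨Finset.filter_subset_filter _ (Finset.subset_univ S), hS.1⟩,
      ⟨Finset.filter_subset_filter _ (Finset.subset_univ S), hS.2⟩⟩
  · intro T hT
    simp only [Finset.mem_product, Finset.mem_powersetCard] at hT
    obtain ⟨⟨hT1, hc1⟩, hT2, hc2⟩ := hT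
    have h1 : T.1.filter p = T.1 := Finset.filter_true_of_mem (fun x hx => by
      have := hT1 hx; simp only [mem_filter] at this; exact this.2)
    have h2 : T.2.filter p = ∅ := Finset.filter_false_of_mem (fun x hx => by
      have := hT2 hx; simp only [mem_filter] at this; exact this.2)
    have h1' : T.1.filter (fun x => ¬ p x) = ∅ := Finset.filter_false_of_mem (fun x hx => by
      have := hT1 hx; simp only [mem_filter] at this; simpa using this.2)
    have h2' : T.2.filter (fun x => ¬ p x) = T.2 := Finset.filter_true_of_mem (fun x hx => by
      have := hT2 hx; simp only [mem_filter] at this; exact this.2)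
    simp only [mem_filter, mem_univ, true_and, Finset.filter_union, h1, h2, h1', h2',
      Finset.union_empty, Finset.empty_union]
    exact ⟨hc1, hc2⟩
  · intro S _
    exact Finset.filter_union_filter_not_eq p S
  · intro T hT
    simp only [Finset.mem_product, Finset.mem_powersetCard] at hT
    obtain ⟨⟨hT1, _⟩, hT2, _⟩ := hT
    have h1 : T.1.filter p = T.1 := Finset.filter_true_of_mem (fun x hx => by
      have := hT1 hx; simp only [mem_filter] at this; exact this.2)
    have h2 : T.2.filter p = ∅ := Finset.filter_false_of_mem (fun x hx => by
      have := hT2 hx; simp only [mem_filter] at this; exact this.2)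
    have h1' : T.1.filter (fun x => ¬ p x) = ∅ := Finset.filter_false_of_mem (fun x hx => by
      have := hT1 hx; simp only [mem_filter] at this; simpa using this.2)
    have h2' : T.2.filter (fun x => ¬ p x) = T.2 := Finset.filter_true_of_mem (fun x hx => by
      have := hT2 hx; simp only [mem_filter] at this; exact this.2)
    simp only [Finset.filter_union, h1, h2, h1', h2', Finset.union_empty,
      Finset.empty_union]

lemma patt1_card (n : ℕ) (hn : 1 ≤ n) :
    ((univ : Finset (Fin (2*n) × Fin (2*n) × Fin (2*n) × Fin (2*n))).filter
      (fun t => t.1 < t.2.1 ∧ t.2.1 < t.2.2.1 ∧ t.2.2.1 < t.2.2.2 ∧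
        t.1.val % 2 = 0 ∧ t.2.1.val % 2 = 0 ∧ t.2.2.1.val % 2 = 1 ∧ t.2.2.2.val % 2 = 1)).card
      = (n+1).choose 4 := by
  rw [← chains_card (n+1)]
  refine Finset.card_bij'
    (fun (t : Fin (2*n) × Fin (2*n) × Fin (2*n) × Fin (2*n)) _ =>
      ((⟨t.1.val / 2, by have := t.1.isLt; omega⟩ : Fin (n+1)),
       (⟨t.2.1.val / 2, by have := t.2.1.isLt; omega⟩ : Fin (n+1)),
       (⟨t.2.2.1.val / 2 + 1, by have := t.2.2.1.isLt; omega⟩ : Fin (n+1)),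
       (⟨t.2.2.2.val / 2 + 1, by have := t.2.2.2.isLt; omega⟩ : Fin (n+1))))
    (fun (u : Fin (n+1) × Fin (n+1) × Fin (n+1) × Fin (n+1)) _ =>
      ((⟨min (2 * u.1.val) (2*n-1), by omega⟩ : Fin (2*n)),
       (⟨min (2 * u.2.1.val) (2*n-1), by omega⟩ : Fin (2*n)),
       (⟨2 * u.2.2.1.val - 1, by have := u.2.2.1.isLt; omega⟩ : Fin (2*n)),
       (⟨2 * u.2.2.2.val - 1, by have := u.2.2.2.isLt; omega⟩ : Fin (2*n))))
    ?_ ?_ ?_ ?_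
  · rintro ⟨a,b,c,d⟩ ht
    simp only [mem_filter, mem_univ, true_and, Fin.lt_def] at ht ⊢
    omega
  · rintro ⟨w,x,y,z⟩ hu
    simp only [mem_filter, mem_univ, true_and, Fin.lt_def] at hu ⊢
    omega
  · rintro ⟨a,b,c,d⟩ ht
    simp only [mem_filter, mem_univ, true_and, Fin.lt_def] at ht
    simp only [Prod.mk.injEq, Fin.ext_iff]
    omega
  · rintro ⟨w,x,y,z⟩ hu
    simp only [mem_filter, mem_univ, true_and, Fin.lt_def] at hu
    simp only [Prod.mk.injEq, Fin.ext_iff]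
    have := w.isLt; have := x.isLt; have := y.isLt; have := z.isLt
    omega

lemma patt2_card (n : ℕ) (hn : 1 ≤ n) :
    ((univ : Finset (Fin (2*n) × Fin (2*n) × Fin (2*n) × Fin (2*n))).filter
      (fun t => t.1 < t.2.1 ∧ t.2.1 < t.2.2.1 ∧ t.2.2.1 < t.2.2.2 ∧
        t.1.val % 2 = 0 ∧ t.2.1.val % 2 = 1 ∧ t.2.2.1.val % 2 = 1 ∧ t.2.2.2.val % 2 = 0)).card
      = (n+1).choose 4 := by
  rw [← chains_card (n+1)]
  refine Finset.card_bij'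
    (fun (t : Fin (2*n) × Fin (2*n) × Fin (2*n) × Fin (2*n)) _ =>
      ((⟨t.1.val / 2, by have := t.1.isLt; omega⟩ : Fin (n+1)),
       (⟨t.2.1.val / 2 + 1, by have := t.2.1.isLt; omega⟩ : Fin (n+1)),
       (⟨t.2.2.1.val / 2 + 1, by have := t.2.2.1.isLt; omega⟩ : Fin (n+1)),
       (⟨t.2.2.2.val / 2 + 1, by have := t.2.2.2.isLt; omega⟩ : Fin (n+1))))
    (fun (u : Fin (n+1) × Fin (n+1) × Fin (n+1) × Fin (n+1)) _ =>
      ((⟨min (2 * u.1.val) (2*n-1), by have := u.1.isLt; omega⟩ : Fin (2*n)),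
       (⟨2 * u.2.1.val - 1, by have := u.2.1.isLt; omega⟩ : Fin (2*n)),
       (⟨2 * u.2.2.1.val - 1, by have := u.2.2.1.isLt; omega⟩ : Fin (2*n)),
       (⟨2 * u.2.2.2.val - 2, by have := u.2.2.2.isLt; omega⟩ : Fin (2*n))))
    ?_ ?_ ?_ ?_
  · rintro ⟨a,b,c,d⟩ ht
    simp only [mem_filter, mem_univ, true_and, Fin.lt_def] at ht ⊢
    omega
  · rintro ⟨w,x,y,z⟩ hu
    simp only [mem_filter, mem_univ, true_and, Fin.lt_def] at hu ⊢
    omega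
  · rintro ⟨a,b,c,d⟩ ht
    simp only [mem_filter, mem_univ, true_and, Fin.lt_def] at ht
    simp only [Prod.mk.injEq, Fin.ext_iff]
    omega
  · rintro ⟨w,x,y,z⟩ hu
    simp only [mem_filter, mem_univ, true_and, Fin.lt_def] at hu
    simp only [Prod.mk.injEq, Fin.ext_iff]
    have := w.isLt; have := x.isLt; have := y.isLt; have := z.isLt
    omega

lemma patt3_card (n : ℕ) (hn : 1 ≤ n) :
    ((univ : Finset (Fin (2*n) × Fin (2*n) × Fin (2*n) × Fin (2*n))).filter
      (fun t => t.1 < t.2.1 ∧ t.2.1 < t.2.2.1 ∧ t.2.2.1 < t.2.2.2 ∧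
        t.1.val % 2 = 1 ∧ t.2.1.val % 2 = 0 ∧ t.2.2.1.val % 2 = 0 ∧ t.2.2.2.val % 2 = 1)).card
      = (n+1).choose 4 := by
  rw [← chains_card (n+1)]
  refine Finset.card_bij'
    (fun (t : Fin (2*n) × Fin (2*n) × Fin (2*n) × Fin (2*n)) _ =>
      ((⟨t.1.val / 2, by have := t.1.isLt; omega⟩ : Fin (n+1)),
       (⟨t.2.1.val / 2, by have := t.2.1.isLt; omega⟩ : Fin (n+1)),
       (⟨t.2.2.1.val / 2, by have := t.2.2.1.isLt; omega⟩ : Fin (n+1)),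
       (⟨t.2.2.2.val / 2 + 1, by have := t.2.2.2.isLt; omega⟩ : Fin (n+1))))
    (fun (u : Fin (n+1) × Fin (n+1) × Fin (n+1) × Fin (n+1)) _ =>
      ((⟨min (2 * u.1.val + 1) (2*n-1), by have := u.1.isLt; omega⟩ : Fin (2*n)),
       (⟨min (2 * u.2.1.val) (2*n-1), by have := u.2.1.isLt; omega⟩ : Fin (2*n)),
       (⟨min (2 * u.2.2.1.val) (2*n-1), by have := u.2.2.1.isLt; omega⟩ : Fin (2*n)),
       (⟨2 * u.2.2.2.val - 1, by have := u.2.2.2.isLt; omega⟩ : Fin (2*n))))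
    ?_ ?_ ?_ ?_
  · rintro ⟨a,b,c,d⟩ ht
    simp only [mem_filter, mem_univ, true_and, Fin.lt_def] at ht ⊢
    omega
  · rintro ⟨w,x,y,z⟩ hu
    simp only [mem_filter, mem_univ, true_and, Fin.lt_def] at hu ⊢
    omega
  · rintro ⟨a,b,c,d⟩ ht
    simp only [mem_filter, mem_univ, true_and, Fin.lt_def] at ht
    simp only [Prod.mk.injEq, Fin.ext_iff]
    omega
  · rintro ⟨w,x,y,z⟩ hu
    simp only [mem_filter, mem_univ, true_and, Fin.lt_def] at hu
    simp only [Prod.mk.injEq, Fin.ext_iff]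
    have := w.isLt; have := x.isLt; have := y.isLt; have := z.isLt
    omega

lemma patt4_card (n : ℕ) (hn : 1 ≤ n) :
    ((univ : Finset (Fin (2*n) × Fin (2*n) × Fin (2*n) × Fin (2*n))).filter
      (fun t => t.1 < t.2.1 ∧ t.2.1 < t.2.2.1 ∧ t.2.2.1 < t.2.2.2 ∧
        t.1.val % 2 = 1 ∧ t.2.1.val % 2 = 1 ∧ t.2.2.1.val % 2 = 0 ∧ t.2.2.2.val % 2 = 0)).card
      = n.choose 4 := by
  rw [← chains_card n]
  refine Finset.card_bij'
    (fun (t : Fin (2*n) × Fin (2*n) × Fin (2*n) × Fin (2*n)) _ =>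
      ((⟨t.1.val / 2, by have := t.1.isLt; omega⟩ : Fin n),
       (⟨t.2.1.val / 2, by have := t.2.1.isLt; omega⟩ : Fin n),
       (⟨t.2.2.1.val / 2, by have := t.2.2.1.isLt; omega⟩ : Fin n),
       (⟨t.2.2.2.val / 2, by have := t.2.2.2.isLt; omega⟩ : Fin n)))
    (fun (u : Fin n × Fin n × Fin n × Fin n) _ =>
      ((⟨2 * u.1.val + 1, by have := u.1.isLt; omega⟩ : Fin (2*n)),
       (⟨2 * u.2.1.val + 1, by have := u.2.1.isLt; omega⟩ : Fin (2*n)),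
       (⟨2 * u.2.2.1.val, by have := u.2.2.1.isLt; omega⟩ : Fin (2*n)),
       (⟨2 * u.2.2.2.val, by have := u.2.2.2.isLt; omega⟩ : Fin (2*n))))
    ?_ ?_ ?_ ?_
  · rintro ⟨a,b,c,d⟩ ht
    simp only [mem_filter, mem_univ, true_and, Fin.lt_def] at ht ⊢
    omega
  · rintro ⟨w,x,y,z⟩ hu
    simp only [mem_filter, mem_univ, true_and, Fin.lt_def] at hu ⊢
    omega
  · rintro ⟨a,b,c,d⟩ ht
    simp only [mem_filter, mem_univ, true_and, Fin.lt_def] at ht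
    simp only [Prod.mk.injEq, Fin.ext_iff]
    omega
  · rintro ⟨w,x,y,z⟩ hu
    simp only [mem_filter, mem_univ, true_and, Fin.lt_def] at hu
    simp only [Prod.mk.injEq, Fin.ext_iff]
    have := w.isLt; have := x.isLt; have := y.isLt; have := z.isLt
    omega


lemma arith_id (n : ℕ) : 3 * (n+1).choose 4 + n.choose 4 = n * n.choose 3 := by
  rcases Nat.lt_or_ge n 3 with h | h
  · interval_cases n <;> decide
  · have h1 : (n+1).choose 4 = n.choose 3 + n.choose 4 := Nat.choose_succ_succ n 3
    have h2 : n.choose 4 * 4 = n.choose 3 * (n - 3) := Nat.choose_succ_right_eq n 3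
    have h3 : n * n.choose 3 = (n - 3) * n.choose 3 + 3 * n.choose 3 := by
      have hn : n = (n - 3) + 3 := by omega
      nth_rewrite 1 [hn]; ring
    rw [h1, h3]
    have h2' : n.choose 3 * (n-3) = (n-3) * n.choose 3 := by ring
    omega

lemma arith_id2 (n : ℕ) :
    n.choose 3 * n.choose 1 + n.choose 1 * n.choose 3 = 2 * n * n.choose 3 := by
  rw [Nat.choose_one_right]; ring

lemma parity_equiv (pa pb pc pd : ℕ) (ha2 : pa < 2) (hb2 : pb < 2) (hc2 : pc < 2)
    (hd2 : pd < 2) :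
    (((if pa = 0 then 1 else 0) + (if pb = 0 then 1 else 0) + (if pc = 0 then 1 else 0)
        + (if pd = 0 then 1 else 0) = 2) ∧ ¬(pa ≠ pb ∧ pb ≠ pc ∧ pc ≠ pd)) ↔
      ((pa = 0 ∧ pb = 0 ∧ pc = 1 ∧ pd = 1) ∨ (pa = 0 ∧ pb = 1 ∧ pc = 1 ∧ pd = 0) ∨
       (pa = 1 ∧ pb = 0 ∧ pc = 0 ∧ pd = 1) ∨ (pa = 1 ∧ pb = 1 ∧ pc = 0 ∧ pd = 0)) := by
  by_cases ha : pa = 0 <;> by_cases hb : pb = 0 <;> by_cases hc : pc = 0 <;>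
    by_cases hd : pd = 0 <;> simp [ha, hb, hc, hd] <;> omega



lemma card_union4 {α : Type*} [DecidableEq α] {f1 f2 f3 f4 : Finset α}
    (d1 : Disjoint f1 f2) (d2 : Disjoint (f1 ∪ f2) f3) (d3 : Disjoint ((f1 ∪ f2) ∪ f3) f4) :
    (((f1 ∪ f2) ∪ f3) ∪ f4).card = f1.card + f2.card + f3.card + f4.card := by
  rw [Finset.card_union_of_disjoint d3, Finset.card_union_of_disjoint d2,
    Finset.card_union_of_disjoint d1]

lemma quad_cond (n : ℕ) {a b c d : Fin (2*n)} (h1 : a < b) (h2 : b < c) (h3 : c < d) :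
    (({a,b,c,d} : Finset (Fin (2*n))).card = 4 ∧
     (({a,b,c,d} : Finset (Fin (2*n))).filter (fun k => k.val % 2 = 0)).card = 2 ∧
     ¬ (({a,b,c,d} : Finset (Fin (2*n))).sort (· ≤ ·)).Chain'
        (fun x y : Fin (2*n) => x.val % 2 ≠ y.val % 2)) ↔
    ((a.val % 2 = 0 ∧ b.val % 2 = 0 ∧ c.val % 2 = 1 ∧ d.val % 2 = 1) ∨
     (a.val % 2 = 0 ∧ b.val % 2 = 1 ∧ c.val % 2 = 1 ∧ d.val % 2 = 0) ∨
     (a.val % 2 = 1 ∧ b.val % 2 = 0 ∧ c.val % 2 = 0 ∧ d.val % 2 = 1) ∨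
     (a.val % 2 = 1 ∧ b.val % 2 = 1 ∧ c.val % 2 = 0 ∧ d.val % 2 = 0)) := by
  rw [sort_quad h1 h2 h3, filter_quad_card (fun k : Fin (2*n) => k.val % 2 = 0) h1 h2 h3,
    quad_card h1 h2 h3]
  simp only [List.Chain', List.isChain_cons_cons, List.isChain_singleton, and_true, true_and]
  exact parity_equiv _ _ _ _ (Nat.mod_lt _ (by norm_num)) (Nat.mod_lt _ (by norm_num))
    (Nat.mod_lt _ (by norm_num)) (Nat.mod_lt _ (by norm_num))


/-- Points at the vertices of a regular `2n`-gon are labelled by `Fin (2*n)` in cyclic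
order; point `k` is black iff `k` is even.  Type (3) subsets (three of one color, one of
the other) number `2n·C(n,3)`; type (4) subsets (two of each color, but not alternating
in cyclic order around the polygon) number `n·C(n,3)`. -/
theorem stmt14 (n : ℕ) (hn : 1 ≤ n) :
    Nat.card {S : Finset (Fin (2 * n)) // S.card = 4 ∧
        ((S.filter (fun k : Fin (2 * n) => k.val % 2 = 0)).card = 3 ∨
         (S.filter (fun k : Fin (2 * n) => k.val % 2 = 0)).card = 1)} = 2 * n * Nat.choose n 3
    ∧ Nat.card {S : Finset (Fin (2 * n)) // S.card = 4 ∧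
        (S.filter (fun k : Fin (2 * n) => k.val % 2 = 0)).card = 2 ∧
        ¬ (S.sort (· ≤ ·)).Chain' (fun a b : Fin (2 * n) => a.val % 2 ≠ b.val % 2)} =
      n * Nat.choose n 3 := by
  constructor
  · -- Part (3)
    rw [Nat.card_eq_fintype_card, Fintype.card_subtype]
    have hsplit : ((univ : Finset (Finset (Fin (2*n)))).filter (fun S => S.card = 4 ∧
        ((S.filter (fun k : Fin (2*n) => k.val % 2 = 0)).card = 3 ∨
         (S.filter (fun k : Fin (2*n) => k.val % 2 = 0)).card = 1)))
        = ((univ : Finset (Finset (Fin (2*n)))).filter (fun S =>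
            (S.filter (fun k : Fin (2*n) => k.val % 2 = 0)).card = 3 ∧
            (S.filter (fun k : Fin (2*n) => ¬ k.val % 2 = 0)).card = 1))
          ∪ ((univ : Finset (Finset (Fin (2*n)))).filter (fun S =>
            (S.filter (fun k : Fin (2*n) => k.val % 2 = 0)).card = 1 ∧
            (S.filter (fun k : Fin (2*n) => ¬ k.val % 2 = 0)).card = 3)) := by
      ext S
      simp only [mem_filter, mem_union, mem_univ, true_and]
      have h := Finset.card_filter_add_card_filter_not
        (s := S) (fun k : Fin (2*n) => k.val % 2 = 0)
      omega
    have hdisj : Disjoint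
        ((univ : Finset (Finset (Fin (2*n)))).filter (fun S =>
            (S.filter (fun k : Fin (2*n) => k.val % 2 = 0)).card = 3 ∧
            (S.filter (fun k : Fin (2*n) => ¬ k.val % 2 = 0)).card = 1))
        ((univ : Finset (Finset (Fin (2*n)))).filter (fun S =>
            (S.filter (fun k : Fin (2*n) => k.val % 2 = 0)).card = 1 ∧
            (S.filter (fun k : Fin (2*n) => ¬ k.val % 2 = 0)).card = 3)) := by
      rw [Finset.disjoint_left]
      intro S hS1 hS2
      simp only [mem_filter] at hS1 hS2
      omega
    rw [hsplit, Finset.card_union_of_disjoint hdisj,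
      count_filter_eq (fun k : Fin (2*n) => k.val % 2 = 0) 3 1,
      count_filter_eq (fun k : Fin (2*n) => k.val % 2 = 0) 1 3,
      evens_card, odds_card, arith_id2]
  · -- Part (4)
    classical
    rw [Nat.card_eq_fintype_card, Fintype.card_subtype]
    have key : ((univ : Finset (Finset (Fin (2*n)))).filter (fun S => S.card = 4 ∧
        (S.filter (fun k : Fin (2*n) => k.val % 2 = 0)).card = 2 ∧
        ¬ (S.sort (· ≤ ·)).Chain' (fun a b : Fin (2*n) => a.val % 2 ≠ b.val % 2))).card
        = (((univ : Finset (Fin (2*n) × Fin (2*n) × Fin (2*n) × Fin (2*n))).filter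
            (fun t => t.1 < t.2.1 ∧ t.2.1 < t.2.2.1 ∧ t.2.2.1 < t.2.2.2 ∧
              t.1.val % 2 = 0 ∧ t.2.1.val % 2 = 0 ∧ t.2.2.1.val % 2 = 1 ∧ t.2.2.2.val % 2 = 1)
          ∪ (univ : Finset (Fin (2*n) × Fin (2*n) × Fin (2*n) × Fin (2*n))).filter
            (fun t => t.1 < t.2.1 ∧ t.2.1 < t.2.2.1 ∧ t.2.2.1 < t.2.2.2 ∧
              t.1.val % 2 = 0 ∧ t.2.1.val % 2 = 1 ∧ t.2.2.1.val % 2 = 1 ∧ t.2.2.2.val % 2 = 0)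
          ∪ (univ : Finset (Fin (2*n) × Fin (2*n) × Fin (2*n) × Fin (2*n))).filter
            (fun t => t.1 < t.2.1 ∧ t.2.1 < t.2.2.1 ∧ t.2.2.1 < t.2.2.2 ∧
              t.1.val % 2 = 1 ∧ t.2.1.val % 2 = 0 ∧ t.2.2.1.val % 2 = 0 ∧ t.2.2.2.val % 2 = 1)
          ∪ (univ : Finset (Fin (2*n) × Fin (2*n) × Fin (2*n) × Fin (2*n))).filter
            (fun t => t.1 < t.2.1 ∧ t.2.1 < t.2.2.1 ∧ t.2.2.1 < t.2.2.2 ∧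
              t.1.val % 2 = 1 ∧ t.2.1.val % 2 = 1 ∧ t.2.2.1.val % 2 = 0 ∧ t.2.2.2.val % 2 = 0))).card := by
      refine (Finset.card_bij
        (fun (t : Fin (2*n) × Fin (2*n) × Fin (2*n) × Fin (2*n)) _ =>
          ({t.1, t.2.1, t.2.2.1, t.2.2.2} : Finset (Fin (2*n)))) ?_ ?_ ?_).symm
      · rintro ⟨a,b,c,d⟩ ht
        simp only [mem_union, mem_filter, mem_univ, true_and] at ht
        simp only [mem_filter, mem_univ, true_and]
        rcases ht with ((⟨h1,h2,h3,hp⟩|⟨h1,h2,h3,hp⟩)|⟨h1,h2,h3,hp⟩)|⟨h1,h2,h3,hp⟩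
        · exact (quad_cond n h1 h2 h3).mpr (Or.inl hp)
        · exact (quad_cond n h1 h2 h3).mpr (Or.inr (Or.inl hp))
        · exact (quad_cond n h1 h2 h3).mpr (Or.inr (Or.inr (Or.inl hp)))
        · exact (quad_cond n h1 h2 h3).mpr (Or.inr (Or.inr (Or.inr hp)))
      · rintro ⟨a,b,c,d⟩ ht ⟨a',b',c',d'⟩ ht' h
        simp only [mem_union, mem_filter, mem_univ, true_and] at ht ht'
        have hlt : a < b ∧ b < c ∧ c < d := by
          rcases ht with ((⟨h1,h2,h3,-⟩|⟨h1,h2,h3,-⟩)|⟨h1,h2,h3,-⟩)|⟨h1,h2,h3,-⟩ <;>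
            exact ⟨h1,h2,h3⟩
        have hlt' : a' < b' ∧ b' < c' ∧ c' < d' := by
          rcases ht' with ((⟨h1,h2,h3,-⟩|⟨h1,h2,h3,-⟩)|⟨h1,h2,h3,-⟩)|⟨h1,h2,h3,-⟩ <;>
            exact ⟨h1,h2,h3⟩
        obtain ⟨rfl, rfl, rfl, rfl⟩ :=
          quad_inj hlt.1 hlt.2.1 hlt.2.2 hlt'.1 hlt'.2.1 hlt'.2.2 h
        rfl
      · intro S hS
        simp only [mem_filter, mem_univ, true_and] at hS
        obtain ⟨a, b, c, d, h1, h2, h3, rfl, -⟩ := exists_sort_quad hS.1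
        refine ⟨(a,b,c,d), ?_, rfl⟩
        have hpat := (quad_cond n h1 h2 h3).mp hS
        rcases hpat with hp | hp | hp | hp
        · exact mem_union_left _ (mem_union_left _ (mem_union_left _ (mem_filter.mpr
            ⟨mem_univ _, h1, h2, h3, hp.1, hp.2.1, hp.2.2.1, hp.2.2.2⟩)))
        · exact mem_union_left _ (mem_union_left _ (mem_union_right _ (mem_filter.mpr
            ⟨mem_univ _, h1, h2, h3, hp.1, hp.2.1, hp.2.2.1, hp.2.2.2⟩)))
        · exact mem_union_left _ (mem_union_right _ (mem_filter.mpr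
            ⟨mem_univ _, h1, h2, h3, hp.1, hp.2.1, hp.2.2.1, hp.2.2.2⟩))
        · exact mem_union_right _ (mem_filter.mpr
            ⟨mem_univ _, h1, h2, h3, hp.1, hp.2.1, hp.2.2.1, hp.2.2.2⟩)
    have d1 : Disjoint ((univ : Finset (Fin (2*n) × Fin (2*n) × Fin (2*n) × Fin (2*n))).filter
            (fun t => t.1 < t.2.1 ∧ t.2.1 < t.2.2.1 ∧ t.2.2.1 < t.2.2.2 ∧
              t.1.val % 2 = 0 ∧ t.2.1.val % 2 = 0 ∧ t.2.2.1.val % 2 = 1 ∧ t.2.2.2.val % 2 = 1))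
          ((univ : Finset (Fin (2*n) × Fin (2*n) × Fin (2*n) × Fin (2*n))).filter
            (fun t => t.1 < t.2.1 ∧ t.2.1 < t.2.2.1 ∧ t.2.2.1 < t.2.2.2 ∧
              t.1.val % 2 = 0 ∧ t.2.1.val % 2 = 1 ∧ t.2.2.1.val % 2 = 1 ∧ t.2.2.2.val % 2 = 0)) := by
      rw [Finset.disjoint_left]; intro t h1 h2
      simp only [mem_filter, mem_univ, true_and] at h1 h2
      omega
    have d2 : Disjoint (((univ : Finset (Fin (2*n) × Fin (2*n) × Fin (2*n) × Fin (2*n))).filter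
            (fun t => t.1 < t.2.1 ∧ t.2.1 < t.2.2.1 ∧ t.2.2.1 < t.2.2.2 ∧
              t.1.val % 2 = 0 ∧ t.2.1.val % 2 = 0 ∧ t.2.2.1.val % 2 = 1 ∧ t.2.2.2.val % 2 = 1))
          ∪ ((univ : Finset (Fin (2*n) × Fin (2*n) × Fin (2*n) × Fin (2*n))).filter
            (fun t => t.1 < t.2.1 ∧ t.2.1 < t.2.2.1 ∧ t.2.2.1 < t.2.2.2 ∧
              t.1.val % 2 = 0 ∧ t.2.1.val % 2 = 1 ∧ t.2.2.1.val % 2 = 1 ∧ t.2.2.2.val % 2 = 0)))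
          ((univ : Finset (Fin (2*n) × Fin (2*n) × Fin (2*n) × Fin (2*n))).filter
            (fun t => t.1 < t.2.1 ∧ t.2.1 < t.2.2.1 ∧ t.2.2.1 < t.2.2.2 ∧
              t.1.val % 2 = 1 ∧ t.2.1.val % 2 = 0 ∧ t.2.2.1.val % 2 = 0 ∧ t.2.2.2.val % 2 = 1)) := by
      rw [Finset.disjoint_left]; intro t h1 h2
      simp only [mem_filter, mem_union, mem_univ, true_and] at h1 h2
      omega
    have d3 : Disjoint ((((univ : Finset (Fin (2*n) × Fin (2*n) × Fin (2*n) × Fin (2*n))).filter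
            (fun t => t.1 < t.2.1 ∧ t.2.1 < t.2.2.1 ∧ t.2.2.1 < t.2.2.2 ∧
              t.1.val % 2 = 0 ∧ t.2.1.val % 2 = 0 ∧ t.2.2.1.val % 2 = 1 ∧ t.2.2.2.val % 2 = 1))
          ∪ ((univ : Finset (Fin (2*n) × Fin (2*n) × Fin (2*n) × Fin (2*n))).filter
            (fun t => t.1 < t.2.1 ∧ t.2.1 < t.2.2.1 ∧ t.2.2.1 < t.2.2.2 ∧
              t.1.val % 2 = 0 ∧ t.2.1.val % 2 = 1 ∧ t.2.2.1.val % 2 = 1 ∧ t.2.2.2.val % 2 = 0)))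
          ∪ ((univ : Finset (Fin (2*n) × Fin (2*n) × Fin (2*n) × Fin (2*n))).filter
            (fun t => t.1 < t.2.1 ∧ t.2.1 < t.2.2.1 ∧ t.2.2.1 < t.2.2.2 ∧
              t.1.val % 2 = 1 ∧ t.2.1.val % 2 = 0 ∧ t.2.2.1.val % 2 = 0 ∧ t.2.2.2.val % 2 = 1)))
          ((univ : Finset (Fin (2*n) × Fin (2*n) × Fin (2*n) × Fin (2*n))).filter
            (fun t => t.1 < t.2.1 ∧ t.2.1 < t.2.2.1 ∧ t.2.2.1 < t.2.2.2 ∧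
              t.1.val % 2 = 1 ∧ t.2.1.val % 2 = 1 ∧ t.2.2.1.val % 2 = 0 ∧ t.2.2.2.val % 2 = 0)) := by
      rw [Finset.disjoint_left]; intro t h1 h2
      simp only [mem_filter, mem_union, mem_univ, true_and] at h1 h2
      omega
    refine key.trans ((card_union4 d1 d2 d3).trans ?_)
    rw [patt1_card n hn, patt2_card n hn, patt3_card n hn, patt4_card n hn]
    have := arith_id n
    omega
end

section
/- Let n ≥ 1 and N = ⌊(n-1)/2⌋. Suppose nonnegative integers x_{i,j} (0 ≤ i ≤ j ≤ N) and y_i (0 ≤ i ≤ N) satisfy y_i = 2x_{i,i} + Σ_{j=0}^{i-1} x_{j,i} + Σ_{j=i+1}^{N} x_{i,j} for each i. Then Σ_{i=0}^{N} Σ_{j=i}^{N} (i(n-j-1) + j(n-i-1)) x_{i,j} = Σ_{i=1}^{N} i(n-i-1) y_i + Σ_{i=0}^{N-1} Σ_{j=i+1}^{N} (j-i)^2 x_{i,j}. -/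
theorem stmt15 (n : ℕ) (hn : 1 ≤ n) (N : ℕ) (hN : N = (n - 1) / 2)
    (x : ℕ → ℕ → ℤ) (y : ℕ → ℤ)
    (hx : ∀ i j, 0 ≤ x i j) (hy : ∀ i, 0 ≤ y i)
    (h : ∀ i, i ≤ N → y i = 2 * x i i + (∑ j ∈ Finset.range i, x j i)
        + ∑ j ∈ Finset.Icc (i + 1) N, x i j) :
    ∑ i ∈ Finset.range (N + 1), ∑ j ∈ Finset.Icc i N,
        ((i : ℤ) * ((n : ℤ) - j - 1) + (j : ℤ) * ((n : ℤ) - i - 1)) * x i j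
      = (∑ i ∈ Finset.Icc 1 N, (i : ℤ) * ((n : ℤ) - i - 1) * y i)
        + ∑ i ∈ Finset.range N, ∑ j ∈ Finset.Icc (i + 1) N,
            ((j : ℤ) - (i : ℤ)) ^ 2 * x i j := by
  set g : ℕ → ℤ := fun i => (i : ℤ) * ((n : ℤ) - i - 1) with hg
  set c : ℕ → ℕ → ℤ :=
    fun i j => (i : ℤ) * ((n : ℤ) - j - 1) + (j : ℤ) * ((n : ℤ) - i - 1) with hc
  -- Split off the diagonal on the LHS
  have hsplit : ∀ i ∈ Finset.range (N + 1),
      ∑ j ∈ Finset.Icc i N, c i j * x i j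
        = c i i * x i i + ∑ j ∈ Finset.Icc (i + 1) N, c i j * x i j := by
    intro i hi
    rw [Finset.mem_range] at hi
    have hins : Finset.Icc i N = insert i (Finset.Icc (i + 1) N) := by
      ext k; simp only [Finset.mem_Icc, Finset.mem_insert]; omega
    rw [hins, Finset.sum_insert (by simp [Finset.mem_Icc])]
  rw [Finset.sum_congr rfl hsplit, Finset.sum_add_distrib]
  -- Extend the first RHS sum to range (N+1)
  have hext : ∑ i ∈ Finset.Icc 1 N, g i * y i
      = ∑ i ∈ Finset.range (N + 1), g i * y i := by
    refine Finset.sum_subset (fun i hi => ?_) (fun i hi hni => ?_)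
    · rw [Finset.mem_Icc] at hi; rw [Finset.mem_range]; omega
    · rw [Finset.mem_range] at hi
      rw [Finset.mem_Icc] at hni
      have : i = 0 := by omega
      subst this; simp [hg]
  rw [hext]
  -- Substitute y
  have hsub : ∀ i ∈ Finset.range (N + 1), g i * y i
      = g i * 2 * x i i + (∑ j ∈ Finset.range i, g i * x j i)
        + ∑ j ∈ Finset.Icc (i + 1) N, g i * x i j := by
    intro i hi
    rw [Finset.mem_range] at hi
    rw [h i (by omega), ← Finset.mul_sum, ← Finset.mul_sum]
    ring
  rw [Finset.sum_congr rfl hsub]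
  rw [Finset.sum_add_distrib, Finset.sum_add_distrib]
  -- Swap the middle double sum
  have hswap : ∑ i ∈ Finset.range (N + 1), ∑ j ∈ Finset.range i, g i * x j i
      = ∑ i ∈ Finset.range (N + 1), ∑ j ∈ Finset.Icc (i + 1) N, g j * x i j := by
    have := Finset.sum_Ico_Ico_comm' 0 (N + 1) (fun a b => g b * x a b)
    simp only [Nat.Ico_zero_eq_range] at this
    rw [← this]
    refine Finset.sum_congr rfl fun i _ => Finset.sum_congr ?_ fun _ _ => rfl
    rw [Finset.Ico_add_one_right_eq_Icc]
  rw [hswap]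
  -- Extend the last RHS sum to range (N+1)
  have hlast : ∑ i ∈ Finset.range N, ∑ j ∈ Finset.Icc (i + 1) N,
        ((j : ℤ) - (i : ℤ)) ^ 2 * x i j
      = ∑ i ∈ Finset.range (N + 1), ∑ j ∈ Finset.Icc (i + 1) N,
        ((j : ℤ) - (i : ℤ)) ^ 2 * x i j := by
    rw [Finset.sum_range_succ, Finset.Icc_eq_empty (by omega), Finset.sum_empty, add_zero]
  rw [hlast]
  -- Combine and finish pointwise
  have hdiag : ∑ i ∈ Finset.range (N + 1), c i i * x i i
      = ∑ i ∈ Finset.range (N + 1), g i * 2 * x i i := by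
    refine Finset.sum_congr rfl fun i _ => ?_
    simp only [hc, hg]; ring
  rw [hdiag]
  rw [← Finset.sum_add_distrib, ← Finset.sum_add_distrib, ← Finset.sum_add_distrib,
    ← Finset.sum_add_distrib]
  refine Finset.sum_congr rfl fun i _ => ?_
  rw [add_assoc, add_assoc, ← Finset.sum_add_distrib, ← Finset.sum_add_distrib]
  congr 1
  refine Finset.sum_congr rfl fun j _ => ?_
  simp only [hc, hg]; ring
end
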